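/- Let (G,t) be a topological abelian group with character group G' = (G,t)^. The following are equivalent: (1) every k-continuous group homomorphism from (G,t) to 𝕋 (i.e. continuous on each t-compact subset of G) is continuous; (2) the group of continuous characters of (G, k_g[t]) equals G'; (3) the Bohr topology of (G, k_g[t]) equals the Bohr topology of (G,t), i.e. k_g[t]⁺ = t⁺; (4) there exists a k_g-group topology τ on G with t ⊆ τ and τ⁺ = t⁺. -/

import Mathlib

open Filter Topology Pointwise

noncomputable section

/-- The circle group `𝕋 = ℝ/ℤ`. -/
abbrev Circle1 : Type := AddCircle (1 : ℝ)

variable {G : Type*}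

/-- The Bohr topology associated to a group topology `t`: the initial topology induced by
all `t`-continuous homomorphisms into the circle. -/
def bohr [AddCommGroup G] (t : TopologicalSpace G) : TopologicalSpace G :=
  ⨅ (χ : G →+ Circle1) (_ : @Continuous G Circle1 t _ ⇑χ),
    TopologicalSpace.induced ⇑χ inferInstance

/-- A group topology is totally bounded if every neighborhood of `0` has finitely many
translates covering the group. -/
def TotallyBoundedGroup [AddCommGroup G] (w : TopologicalSpace G) : Prop :=
  ∀ U ∈ @nhds G w 0, ∃ F : Finset G, ∀ g : G, ∃ f ∈ F, g - f ∈ U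

/-- `(G,w)` is a Bohr group (a member of the class `𝓑`) if `w` is the Bohr topology of some
locally compact Hausdorff group topology on `G`. -/
def IsBohrGroup [AddCommGroup G] (w : TopologicalSpace G) : Prop :=
  ∃ τ : TopologicalSpace G, @IsTopologicalAddGroup G τ _ ∧ @LocallyCompactSpace G τ ∧
    @T2Space G τ ∧ bohr τ = w

/-- The group of `t`-continuous characters of `G`, as a subgroup of `G →+ 𝕋`. -/
def charSubgroup [AddCommGroup G] (t : TopologicalSpace G) : AddSubgroup (G →+ Circle1) where
  carrier := {χ : G →+ Circle1 | @Continuous G Circle1 t _ ⇑χ}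
  zero_mem' := by
    show @Continuous G Circle1 t _ ⇑(0 : G →+ Circle1)
    simp only [AddMonoidHom.zero_apply, show ⇑(0 : G →+ Circle1) = fun _ => (0:Circle1) from rfl]
    exact @continuous_const G Circle1 t _ 0
  add_mem' := by
    intro χ φ hχ hφ
    show @Continuous G Circle1 t _ ⇑(χ + φ)
    simp only [show ⇑(χ + φ) = fun x => χ x + φ x from rfl]
    exact hχ.add hφ
  neg_mem' := by
    intro χ hχ
    show @Continuous G Circle1 t _ ⇑(-χ)
    simp only [show ⇑(-χ) = fun x => -(χ x) from rfl]
    exact hχ.neg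

/-- The compact-open topology on the character group of `(G,t)`. -/
def coTop [AddCommGroup G] (t : TopologicalSpace G) :
    TopologicalSpace (charSubgroup (G := G) t) :=
  TopologicalSpace.generateFrom
    {S | ∃ (K : Set G) (U : Set Circle1), @IsCompact G t K ∧ IsOpen U ∧
      S = {χ : charSubgroup (G := G) t | ∀ x ∈ K, (χ : G →+ Circle1) x ∈ U}}

/-- The topology of pointwise convergence on the character group of `(G,t)`. -/
def ptTop [AddCommGroup G] (t : TopologicalSpace G) :
    TopologicalSpace (charSubgroup (G := G) t) :=
  TopologicalSpace.induced (fun (χ : charSubgroup (G := G) t) (g : G) => (χ : G →+ Circle1) g)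
    Pi.topologicalSpace

/-- Topological isomorphism between two groups carrying explicitly given topologies. -/
def IsTopAddIso {A B : Type*} [AddCommGroup A] [AddCommGroup B]
    (tA : TopologicalSpace A) (tB : TopologicalSpace B) : Prop :=
  ∃ e : A ≃+ B, @Continuous A B tA tB ⇑e ∧ @Continuous B A tB tA ⇑e.symm

/-- `U` is sequentially open for the topology `t`. -/
def SeqOpenIn (t : TopologicalSpace G) (U : Set G) : Prop :=
  ∀ (u : ℕ → G) (a : G), Filter.Tendsto u Filter.atTop (@nhds G t a) → a ∈ U →
    ∀ᶠ n in Filter.atTop, u n ∈ U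

/-- The sequential modification of `t`: the finest topology with the same convergent
sequences as `t`; its open sets are the `t`-sequentially open sets. -/
def seqMod (t : TopologicalSpace G) : TopologicalSpace G where
  IsOpen U := SeqOpenIn t U
  isOpen_univ := fun _u _a _hu _ha => Filter.Eventually.of_forall fun _ => trivial
  isOpen_inter := fun _U _V hU hV u a hu ha => (hU u a hu ha.1).and (hV u a hu ha.2)
  isOpen_sUnion := fun S hS u a hu ha => by
    obtain ⟨s, hsS, has⟩ := ha
    exact (hS s hsS u a hu has).mono fun n hn => ⟨s, hsS, hn⟩

/-- The `g`-sequential modification `s_g[t]`: the finest group topology coarser than the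
sequential modification of `t`. -/
def sg [AddCommGroup G] (t : TopologicalSpace G) : TopologicalSpace G :=
  sInf {τ : TopologicalSpace G | @IsTopologicalAddGroup G τ _ ∧ seqMod t ≤ τ}

/-- The `k`-modification of `t`: `U` is open iff `U ∩ K` is relatively open in `K` for every
`t`-compact `K`. -/
def kMod (t : TopologicalSpace G) : TopologicalSpace G :=
  ⨆ (K : Set G) (_ : @IsCompact G t K),
    TopologicalSpace.coinduced (Subtype.val : K → G) (TopologicalSpace.induced Subtype.val t)

/-- The topology `k_g[t]`: the supremum (finest) of all group topologies lying between `t`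
and the `k`-modification of `t`. -/
def kg [AddCommGroup G] (t : TopologicalSpace G) : TopologicalSpace G :=
  sInf {τ : TopologicalSpace G | @IsTopologicalAddGroup G τ _ ∧ kMod t ≤ τ ∧ τ ≤ t}

/-- Two topologies have the same convergent sequences. -/
def SameSequences (t s : TopologicalSpace G) : Prop :=
  ∀ (u : ℕ → G) (a : G),
    Filter.Tendsto u Filter.atTop (@nhds G t a) ↔ Filter.Tendsto u Filter.atTop (@nhds G s a)

/-- Two topologies have the same compact subsets. -/
def SameCompacts (t s : TopologicalSpace G) : Prop :=
  ∀ K : Set G, @IsCompact G t K ↔ @IsCompact G s K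

/-- A character is sequentially continuous for `t`. -/
def SeqContinuousChar [AddCommGroup G] (t : TopologicalSpace G) (f : G →+ Circle1) : Prop :=
  ∀ (u : ℕ → G) (a : G), Filter.Tendsto u Filter.atTop (@nhds G t a) →
    Filter.Tendsto (fun n => f (u n)) Filter.atTop (nhds (f a))

/-- A character is `k`-continuous for `t`: continuous on every `t`-compact subset. -/
def KContinuousChar [AddCommGroup G] (t : TopologicalSpace G) (f : G →+ Circle1) : Prop :=
  ∀ K : Set G, @IsCompact G t K → @ContinuousOn G Circle1 t _ ⇑f K

section MyHelpers

variable [AddCommGroup G]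

theorem myKMod_le (t : TopologicalSpace G) : kMod t ≤ t := by
  refine iSup₂_le fun K hK => ?_
  rw [coinduced_le_iff_le_induced]

theorem myKg_le (t : TopologicalSpace G) (hgrp : @IsTopologicalAddGroup G t _) : kg t ≤ t :=
  sInf_le ⟨hgrp, myKMod_le t, le_rfl⟩

theorem myKMod_le_kg (t : TopologicalSpace G) : kMod t ≤ kg t :=
  le_sInf fun _ hτ => hτ.2.1

theorem myTopAddGroup_kg (t : TopologicalSpace G) : @IsTopologicalAddGroup G (kg t) _ :=
  topologicalAddGroup_sInf fun _ hτ => hτ.1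

theorem myContinuous_kMod_iff (t : TopologicalSpace G) {X : Type*} [tX : TopologicalSpace X]
    (f : G → X) :
    @Continuous G X (kMod t) _ f ↔ ∀ K : Set G, @IsCompact G t K → @ContinuousOn G X t _ f K := by
  rw [kMod, continuous_iSup_dom]
  refine forall_congr' fun K => ?_
  rw [continuous_iSup_dom]
  refine forall_congr' fun hK => ?_
  rw [continuous_coinduced_dom, @continuousOn_iff_continuous_restrict G X t _ f K]
  rfl

theorem myInduced_kMod_eq (t : TopologicalSpace G) {K : Set G} (hK : @IsCompact G t K) :
    TopologicalSpace.induced (Subtype.val : K → G) (kMod t)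
      = TopologicalSpace.induced Subtype.val t := by
  refine le_antisymm (induced_mono (myKMod_le t)) ?_
  intro U hU
  rw [@isOpen_induced_iff K G (kMod t) U Subtype.val] at hU
  obtain ⟨V, hV, rfl⟩ := hU
  rw [kMod, isOpen_iSup_iff] at hV
  have := hV K
  rw [isOpen_iSup_iff] at this
  exact isOpen_coinduced.mp (this hK)

theorem myInduced_kg_eq (t : TopologicalSpace G) (hgrp : @IsTopologicalAddGroup G t _)
    {K : Set G} (hK : @IsCompact G t K) :
    TopologicalSpace.induced (Subtype.val : K → G) (kg t)
      = TopologicalSpace.induced Subtype.val t :=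
  le_antisymm (induced_mono (myKg_le t hgrp))
    (myInduced_kMod_eq t hK ▸ induced_mono (myKMod_le_kg t))

theorem myIsCompact_of_le {t s : TopologicalSpace G} (h : s ≤ t) {K : Set G}
    (hK : @IsCompact G s K) : @IsCompact G t K := by
  have hc : @Continuous G G s t id := continuous_id_iff_le.mpr h
  simpa using @IsCompact.image G G s t K id hK hc

theorem myIsCompact_kg (t : TopologicalSpace G) (hgrp : @IsTopologicalAddGroup G t _)
    {K : Set G} (hK : @IsCompact G t K) : @IsCompact G (kg t) K := by
  have hK' : @CompactSpace K (TopologicalSpace.induced (Subtype.val : K → G) t) :=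
    (@isCompact_iff_compactSpace G t K).mp hK
  have hgoal : @CompactSpace K (TopologicalSpace.induced (Subtype.val : K → G) (kg t)) := by
    rw [myInduced_kg_eq t hgrp hK]; exact hK'
  exact (@isCompact_iff_compactSpace G (kg t) K).mpr hgoal

theorem myKMod_kg (t : TopologicalSpace G) (hgrp : @IsTopologicalAddGroup G t _) :
    kMod (kg t) = kMod t := by
  apply le_antisymm
  · refine iSup₂_le fun K hK => ?_
    have hKt : @IsCompact G t K := myIsCompact_of_le (myKg_le t hgrp) hK
    rw [myInduced_kg_eq t hgrp hKt]
    exact le_iSup₂_of_le K hKt le_rfl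
  · refine iSup₂_le fun K hK => ?_
    rw [← myInduced_kg_eq t hgrp hK]
    exact le_iSup₂_of_le K (myIsCompact_kg t hgrp hK) le_rfl

theorem myKg_idem (t : TopologicalSpace G) (hgrp : @IsTopologicalAddGroup G t _) :
    kg (kg t) = kg t := by
  refine le_antisymm (sInf_le ⟨myTopAddGroup_kg t, ?_, le_rfl⟩) (sInf_le_sInf ?_)
  · rw [myKMod_kg t hgrp]; exact myKMod_le_kg t
  · intro τ hτ
    exact ⟨hτ.1, by rw [← myKMod_kg t hgrp]; exact hτ.2.1, hτ.2.2.trans (myKg_le t hgrp)⟩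

theorem myKChar_iff (t : TopologicalSpace G) (hgrp : @IsTopologicalAddGroup G t _)
    (f : G →+ Circle1) :
    KContinuousChar t f ↔ @Continuous G Circle1 (kg t) _ ⇑f := by
  constructor
  · intro h
    have hkMod : @Continuous G Circle1 (kMod t) _ ⇑f := (myContinuous_kMod_iff t ⇑f).mpr h
    rw [continuous_iff_le_induced] at hkMod ⊢
    have hmem : (t ⊓ TopologicalSpace.induced ⇑f inferInstance) ∈
        {τ : TopologicalSpace G | @IsTopologicalAddGroup G τ _ ∧ kMod t ≤ τ ∧ τ ≤ t} :=
      ⟨topologicalAddGroup_inf hgrp (topologicalAddGroup_induced f),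
        le_inf (myKMod_le t) hkMod, inf_le_left⟩
    exact le_trans (sInf_le hmem) inf_le_right
  · intro h
    rw [continuous_iff_le_induced] at h
    refine (myContinuous_kMod_iff t ⇑f).mp ?_
    rw [continuous_iff_le_induced]
    exact le_trans (myKMod_le_kg t) h

theorem myLe_bohr (t : TopologicalSpace G) : t ≤ bohr t :=
  le_iInf fun χ => le_iInf fun hχ => continuous_iff_le_induced.mp hχ

theorem myBohr_congr {t s : TopologicalSpace G} (h : charSubgroup t = charSubgroup s) :
    bohr t = bohr s :=
  iInf_congr fun χ => iInf_congr_Prop (SetLike.ext_iff.mp h χ) fun _ => rfl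

end MyHelpers

/-- for a topological abelian group `(G,t)`, TFAE: every `k`-continuous
character is continuous; `(G,k_g[t])` has the same characters as `(G,t)`; `k_g[t]⁺ = t⁺`;
there is a `k_g`-group topology `τ ⊇ t` with `τ⁺ = t⁺`. -/
theorem stmt15 {G : Type*} [AddCommGroup G] (t : TopologicalSpace G)
    (hgrp : @IsTopologicalAddGroup G t _) :
    [∀ f : G →+ Circle1, KContinuousChar t f → @Continuous G Circle1 t _ ⇑f,
     charSubgroup (kg t) = charSubgroup t,
     bohr (kg t) = bohr t,
     ∃ τ : TopologicalSpace G, @IsTopologicalAddGroup G τ _ ∧ kg τ = τ ∧ τ ≤ t ∧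
       bohr τ = bohr t].TFAE := by
  tfae_have 1 → 2 := by
    intro h1
    refine le_antisymm ?_ ?_
    · intro χ hχ
      exact h1 χ ((myKChar_iff t hgrp χ).mpr hχ)
    · intro χ hχ
      exact continuous_le_dom (myKg_le t hgrp) hχ
  tfae_have 2 → 3 := fun h2 => myBohr_congr h2
  tfae_have 3 → 4 := fun h3 =>
    ⟨kg t, myTopAddGroup_kg t, myKg_idem t hgrp, myKg_le t hgrp, h3⟩
  tfae_have 4 → 1 := by
    rintro ⟨τ, hτgrp, hτidem, hτle, hbohr⟩ f hf
    have hfτ : KContinuousChar τ f := by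
      intro K hK
      have hKt : @IsCompact G t K := myIsCompact_of_le hτle hK
      have h1 := (@continuousOn_iff_continuous_restrict G Circle1 t _ ⇑f K).mp (hf K hKt)
      refine (@continuousOn_iff_continuous_restrict G Circle1 τ _ ⇑f K).mpr ?_
      exact continuous_le_dom (induced_mono hτle) h1
    have hfc : @Continuous G Circle1 τ _ ⇑f := by
      have := (myKChar_iff τ hτgrp f).mp hfτ
      rwa [hτidem] at this
    have hb : bohr τ ≤ TopologicalSpace.induced ⇑f inferInstance := iInf₂_le f hfc
    rw [hbohr] at hb
    rw [continuous_iff_le_induced]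
    exact le_trans (myLe_bohr t) hb
  tfae_finish

end
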